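/- For a finite partition 𝔱 = {t_k}_{k=0}^K ∈ 𝒵, u ∈ U^p and v ∈ V^{p'} with 1/p + 1/p' = 1, the pairing B_𝔱(u,v) = Σ_{k=1}^K ⟨u(t_{k−1}), v(t_k) − v(t_{k−1})⟩ satisfies |B_𝔱(u,v)| ≤ ‖u‖_{U^p} ‖v‖_{V^{p'}}. -/

import Mathlib

noncomputable section

open MeasureTheory Filter

/-- A finite partition `−∞ < t₀ < t₁ < … < t_K ≤ ∞` (the last point may be `∞`). -/
structure Ptn where
  K : ℕ
  hK : 0 < K
  t : Fin (K + 1) → EReal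
  mono : StrictMono t
  h0 : t 0 ≠ ⊥

variable {H : Type*} [NormedAddCommGroup H] [InnerProductSpace ℝ H]

/-- Evaluation of `v : ℝ → H` at an extended real point, with the convention `v(∞) = 0`. -/
def evalE (v : ℝ → H) (x : EReal) : H := if x = ⊤ then 0 else v x.toReal

/-- A `U^p`-atom: a step function `a = ∑_{k=1}^K χ_{[t_{k−1},t_k)} φ_{k−1}` over a finite
partition, with `φ₀ = 0` and `∑_{k=0}^{K−1} ‖φ_k‖^p = 1`. -/
def IsUpAtom (p : ℝ) (a : ℝ → H) : Prop :=
  ∃ (P : Ptn) (φ : Fin P.K → H),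
    φ ⟨0, P.hK⟩ = 0 ∧ (∑ k, ‖φ k‖ ^ p) = 1 ∧
    ∀ x : ℝ, a x = ∑ k : Fin P.K,
      Set.indicator {y : ℝ | P.t k.castSucc ≤ (y : EReal) ∧ (y : EReal) < P.t k.succ}
        (fun _ => φ k) x

/-- An atomic decomposition `u = ∑_j c_j a_j` with `U^p`-atoms `a_j` and `∑ |c_j| < ∞`. -/
def UpHasDecomp (p : ℝ) (u : ℝ → H) (c : ℕ → ℝ) (a : ℕ → ℝ → H) : Prop :=
  (∀ j, IsUpAtom p (a j)) ∧ Summable (fun j => |c j|) ∧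
    ∀ x : ℝ, HasSum (fun j => c j • a j x) (u x)

/-- Membership in the atomic space `U^p`. -/
def MemUp (p : ℝ) (u : ℝ → H) : Prop := ∃ c a, UpHasDecomp p u c a

/-- The `U^p` norm: infimum of `∑ |c_j|` over all atomic decompositions. -/
def UpNorm (p : ℝ) (u : ℝ → H) : ℝ :=
  sInf {S | ∃ c a, UpHasDecomp p u c a ∧ S = ∑' j, |c j|}

/-- The `p`-variation sum of `v` along the partition `P`, with `v(∞) := 0`. -/
def VpSum (p : ℝ) (v : ℝ → H) (P : Ptn) : ℝ :=
  (∑ k : Fin P.K, ‖evalE v (P.t k.succ) - evalE v (P.t k.castSucc)‖ ^ p) ^ (1 / p)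

/-- Membership in `V^p`: the limits at `±∞` exist and the `p`-variation is finite. -/
def MemVp (p : ℝ) (v : ℝ → H) : Prop :=
  (∃ L, Tendsto v atTop (nhds L)) ∧ (∃ L, Tendsto v atBot (nhds L)) ∧
    BddAbove {r | ∃ P : Ptn, r = VpSum p v P}

/-- The `V^p` norm: supremum of the `p`-variation sums over all finite partitions. -/
def VpNorm (p : ℝ) (v : ℝ → H) : ℝ := sSup {r | ∃ P : Ptn, r = VpSum p v P}

/-- The pairing `B_𝔱(u,v) = ∑_{k=1}^K ⟨u(t_{k−1}), v(t_k) − v(t_{k−1})⟩`. -/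
def Bsum (u v : ℝ → H) (P : Ptn) : ℝ :=
  ∑ k : Fin P.K,
    (inner ℝ (evalE u (P.t k.castSucc)) (evalE v (P.t k.succ) - evalE v (P.t k.castSucc)) : ℝ)

/-- `b` is the limit of the partition sums `B_𝔱(u,v)` along refinements. -/
def IsBLimit (u v : ℝ → H) (b : ℝ) : Prop :=
  ∀ ε : ℝ, 0 < ε → ∃ P : Ptn, ∀ Q : Ptn, Set.range P.t ⊆ Set.range Q.t →
    |Bsum u v Q - b| < ε

end

-- ==================== auxiliary lemmas ====================

noncomputable section AuxB

set_option linter.unusedSectionVars false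
open Finset

variable {H : Type*} [NormedAddCommGroup H] [InnerProductSpace ℝ H]

lemma Ptn.t_ne_bot (P : Ptn) (j : Fin (P.K + 1)) : P.t j ≠ ⊥ := fun h =>
  P.h0 (le_bot_iff.mp (h ▸ P.mono.monotone (Fin.zero_le j)))

lemma Ptn.t_castSucc_ne_top (P : Ptn) (k : Fin P.K) : P.t k.castSucc ≠ ⊤ :=
  ((P.mono (Fin.castSucc_lt_last k)).trans_le le_top).ne

lemma evalE_coe (v : ℝ → H) (r : ℝ) : evalE v (r : EReal) = v r := by
  simp [evalE]

lemma tele_sum {G : Type*} [AddCommGroup G] (g : ℕ → G) {m n : ℕ} (h : m ≤ n) :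
    ∑ k ∈ Finset.Icc m n, (g (k + 1) - g k) = g (n + 1) - g m := by
  rw [← Finset.Ico_add_one_right_eq_Icc, Finset.sum_Ico_eq_sub _ (by omega : m ≤ n + 1),
    Finset.sum_range_sub, Finset.sum_range_sub]
  abel

lemma VpSum_nonneg (p : ℝ) (v : ℝ → H) (P : Ptn) : 0 ≤ VpSum p v P :=
  Real.rpow_nonneg (Finset.sum_nonneg fun _ _ => Real.rpow_nonneg (norm_nonneg _) _) _

lemma VpSum_le_VpNorm {p : ℝ} {v : ℝ → H}
    (hv : BddAbove {r | ∃ P : Ptn, r = VpSum p v P}) (P : Ptn) :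
    VpSum p v P ≤ VpNorm p v :=
  le_csSup hv ⟨P, rfl⟩

lemma VpNorm_nonneg {p : ℝ} {v : ℝ → H}
    (hv : BddAbove {r | ∃ P : Ptn, r = VpSum p v P}) (P : Ptn) :
    0 ≤ VpNorm p v :=
  (VpSum_nonneg p v P).trans (VpSum_le_VpNorm hv P)


lemma exists_ptn_of_finset (P : Ptn) (A : Finset (Fin (P.K + 1))) (hA : 2 ≤ A.card) :
    ∃ R : Ptn, ∀ y1 ∈ A, ∀ y2 ∈ A, y1 < y2 → (∀ z ∈ A, z ≤ y1 ∨ y2 ≤ z) →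
      ∃ j : Fin R.K, R.t j.castSucc = P.t y1 ∧ R.t j.succ = P.t y2 := by
  have hNK : A.card - 1 + 1 = A.card := by omega
  set e := A.orderIsoOfFin rfl with hedef
  refine ⟨{ K := A.card - 1, hK := by omega,
            t := fun j => P.t ((e (Fin.cast hNK j) : Fin (P.K + 1))),
            mono := ?_, h0 := P.t_ne_bot _ }, ?_⟩
  · intro j1 j2 hj
    exact P.mono (Subtype.coe_lt_coe.mpr (e.strictMono (by rw [Fin.lt_def]; simp only [Fin.coe_cast]; exact hj)))
  · intro y1 hy1 y2 hy2 hlt hgap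
    set b := e.symm ⟨y1, hy1⟩ with hbdef
    set c := e.symm ⟨y2, hy2⟩ with hcdef
    have heb : (e b : Fin (P.K + 1)) = y1 := by rw [hbdef, OrderIso.apply_symm_apply]
    have hec : (e c : Fin (P.K + 1)) = y2 := by rw [hcdef, OrderIso.apply_symm_apply]
    have hbc : b < c := by
      rw [hbdef, hcdef, e.symm.lt_iff_lt]
      exact Subtype.mk_lt_mk.mpr hlt
    have hcb : c.val = b.val + 1 := by
      by_contra hne
      have hlt2 : b.val + 1 < c.val := by
        have hb := hbc
        rw [Fin.lt_def] at hb
        omega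
      have hmlt : b.val + 1 < A.card := lt_trans hlt2 c.isLt
      have h1 : b < ⟨b.val + 1, hmlt⟩ := Fin.lt_def.mpr (Nat.lt_succ_self _)
      have h2 : (⟨b.val + 1, hmlt⟩ : Fin A.card) < c := Fin.lt_def.mpr hlt2
      have hy1lt : y1 < (e ⟨b.val + 1, hmlt⟩ : Fin (P.K + 1)) := by
        rw [← heb]; exact Subtype.coe_lt_coe.mpr (e.strictMono h1)
      have hylt2 : (e ⟨b.val + 1, hmlt⟩ : Fin (P.K + 1)) < y2 := by
        rw [← hec]; exact Subtype.coe_lt_coe.mpr (e.strictMono h2)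
      rcases hgap _ (e ⟨b.val + 1, hmlt⟩).property with hle | hle
      · exact absurd hle (not_le.mpr hy1lt)
      · exact absurd hle (not_le.mpr hylt2)
    have hjlt : b.val < A.card - 1 := by
      have := c.isLt
      omega
    refine ⟨⟨b.val, hjlt⟩, ?_, ?_⟩
    · show P.t ((e (Fin.cast hNK _) : Fin (P.K + 1))) = P.t y1
      have hcast : Fin.cast hNK (Fin.castSucc ⟨b.val, hjlt⟩) = b := by
        apply Fin.ext; simp
      rw [hcast, heb]
    · show P.t ((e (Fin.cast hNK _) : Fin (P.K + 1))) = P.t y2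
      have hcast : Fin.cast hNK (Fin.succ ⟨b.val, hjlt⟩) = c := by
        apply Fin.ext; simp [hcb]
      rw [hcast, hec]

lemma atom_Bsum_le {p p' : ℝ} (hpq : Real.HolderConjugate p p') (a v : ℝ → H)
    (ha : IsUpAtom p a) (hv : BddAbove {r | ∃ Pt : Ptn, r = VpSum p' v Pt}) (P : Ptn) :
    |Bsum a v P| ≤ VpNorm p' v := by
  classical
  obtain ⟨Q, φ, -, hφsum, haf⟩ := ha
  set G : Fin (P.K + 1) → H := fun j => evalE v (P.t j) with hGdef
  set D : Fin P.K → H := fun k => G k.succ - G k.castSucc with hDdef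
  have hx : ∀ k : Fin P.K, ((P.t k.castSucc).toReal : EReal) = P.t k.castSucc := fun k =>
    EReal.coe_toReal (P.t_castSucc_ne_top k) (P.t_ne_bot k.castSucc)
  set T : Fin Q.K → Finset (Fin P.K) := fun i =>
    univ.filter fun k => Q.t i.castSucc ≤ P.t k.castSucc ∧ P.t k.castSucc < Q.t i.succ with hTdef
  have hmemT : ∀ i k, k ∈ T i ↔
      Q.t i.castSucc ≤ P.t k.castSucc ∧ P.t k.castSucc < Q.t i.succ := by
    intro i k; simp [hTdef]
  -- Step A : regroup the pairing by atom intervals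
  have hstepA : Bsum a v P = ∑ i : Fin Q.K, (inner ℝ (φ i) (∑ k ∈ T i, D k) : ℝ) := by
    have h1 : ∀ k : Fin P.K,
        (inner ℝ (evalE a (P.t k.castSucc)) (D k) : ℝ)
          = ∑ i : Fin Q.K, if k ∈ T i then (inner ℝ (φ i) (D k) : ℝ) else 0 := by
      intro k
      have hev : evalE a (P.t k.castSucc) = a ((P.t k.castSucc).toReal) := by
        have h := evalE_coe a ((P.t k.castSucc).toReal)
        rwa [hx k] at h
      rw [hev, haf ((P.t k.castSucc).toReal), sum_inner]
      refine Finset.sum_congr rfl fun i _ => ?_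
      rw [Set.indicator_apply]
      by_cases hc : ((P.t k.castSucc).toReal : ℝ) ∈
          {y : ℝ | Q.t i.castSucc ≤ (y : EReal) ∧ (y : EReal) < Q.t i.succ}
      · rw [if_pos hc, if_pos]
        rw [hmemT]
        simpa only [Set.mem_setOf_eq, hx k] using hc
      · rw [if_neg hc, if_neg, inner_zero_left]
        rw [hmemT]
        simpa only [Set.mem_setOf_eq, hx k] using hc
    calc Bsum a v P = ∑ k : Fin P.K, (inner ℝ (evalE a (P.t k.castSucc)) (D k) : ℝ) := rfl
      _ = ∑ k : Fin P.K, ∑ i : Fin Q.K, if k ∈ T i then (inner ℝ (φ i) (D k) : ℝ) else 0 :=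
          Finset.sum_congr rfl fun k _ => h1 k
      _ = ∑ i : Fin Q.K, ∑ k : Fin P.K, if k ∈ T i then (inner ℝ (φ i) (D k) : ℝ) else 0 :=
          Finset.sum_comm
      _ = ∑ i : Fin Q.K, (inner ℝ (φ i) (∑ k ∈ T i, D k) : ℝ) := by
          refine Finset.sum_congr rfl fun i _ => ?_
          rw [Finset.sum_ite_mem, Finset.univ_inter, inner_sum]
  -- convexity and disjointness of the T i
  have hconvex : ∀ i (k1 k2 k : Fin P.K), k1 ∈ T i → k2 ∈ T i → k1 ≤ k → k ≤ k2 → k ∈ T i := by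
    intro i k1 k2 k h1 h2 hl hr
    rw [hmemT] at h1 h2 ⊢
    exact ⟨h1.1.trans (P.mono.monotone (by simpa using hl)),
      lt_of_le_of_lt (P.mono.monotone (by simpa using hr)) h2.2⟩
  have hdisj : ∀ i i' (k : Fin P.K), k ∈ T i → k ∈ T i' → i = i' := by
    intro i i' k h h'
    rw [hmemT] at h h'
    by_contra hne
    have key : ∀ a b : Fin Q.K, a < b →
        Q.t a.castSucc ≤ P.t k.castSucc → P.t k.castSucc < Q.t a.succ →
        Q.t b.castSucc ≤ P.t k.castSucc → False := by
      intro a b hab _ h2 h3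
      have hle : (a.succ : Fin (Q.K + 1)) ≤ b.castSucc := by
        simp only [Fin.le_def, Fin.val_succ, Fin.coe_castSucc]
        exact hab
      exact absurd (h2.trans_le ((Q.mono.monotone hle).trans h3)) (lt_irrefl _)
    rcases Ne.lt_or_gt hne with hlt | hlt
    · exact key i i' hlt h.1 h.2 h'.1
    · exact key i' i hlt h'.1 h'.2 h.1
  -- nonempty intervals, their endpoints
  set S : Finset (Fin Q.K) := univ.filter fun i => (T i).Nonempty with hSdef
  set lo : Fin Q.K → Fin P.K :=
    fun i => if h : (T i).Nonempty then (T i).min' h else ⟨0, P.hK⟩ with hlodef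
  set hi : Fin Q.K → Fin P.K :=
    fun i => if h : (T i).Nonempty then (T i).max' h else ⟨0, P.hK⟩ with hhidef
  have hSne' : ∀ i ∈ S, (T i).Nonempty := by
    intro i hiS; simpa [hSdef] using hiS
  have hloT : ∀ i ∈ S, lo i ∈ T i := by
    intro i hiS
    rw [hlodef]; simp only [dif_pos (hSne' i hiS)]
    exact (T i).min'_mem _
  have hhiT : ∀ i ∈ S, hi i ∈ T i := by
    intro i hiS
    rw [hhidef]; simp only [dif_pos (hSne' i hiS)]
    exact (T i).max'_mem _
  have hlo_le : ∀ i ∈ S, ∀ k ∈ T i, lo i ≤ k := by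
    intro i hiS k hk
    rw [hlodef]; simp only [dif_pos (hSne' i hiS)]
    exact (T i).min'_le _ hk
  have hle_hi : ∀ i ∈ S, ∀ k ∈ T i, k ≤ hi i := by
    intro i hiS k hk
    rw [hhidef]; simp only [dif_pos (hSne' i hiS)]
    exact (T i).le_max' _ hk
  have hlohi : ∀ i ∈ S, lo i ≤ hi i := fun i hiS => hlo_le i hiS _ (hhiT i hiS)
  have hTIcc : ∀ i ∈ S, T i = Finset.Icc (lo i) (hi i) := by
    intro i hiS
    ext k
    simp only [Finset.mem_Icc]
    constructor
    · intro hk; exact ⟨hlo_le i hiS k hk, hle_hi i hiS k hk⟩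
    · rintro ⟨h1, h2⟩
      exact hconvex i _ _ k (hloT i hiS) (hhiT i hiS) h1 h2
  -- Step B : telescoping
  have hstepB : ∀ i ∈ S, ∑ k ∈ T i, D k = G (hi i).succ - G (lo i).castSucc := by
    intro i hiS
    set g : ℕ → H := fun n => if h : n < P.K + 1 then G ⟨n, h⟩ else 0 with hgdef
    have hg1 : ∀ k : Fin P.K, g (k.val + 1) = G k.succ := by
      intro k
      rw [hgdef]; simp only [dif_pos (Nat.succ_lt_succ k.isLt)]
      congr 1
    have hg2 : ∀ k : Fin P.K, g k.val = G k.castSucc := by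
      intro k
      rw [hgdef]; simp only [dif_pos (Nat.lt_succ_of_lt k.isLt)]
      congr 1
    calc ∑ k ∈ T i, D k = ∑ k ∈ Finset.Icc (lo i) (hi i), (g (k.val + 1) - g k.val) := by
          rw [hTIcc i hiS]
          exact Finset.sum_congr rfl fun k _ => by rw [hg1, hg2]
      _ = ∑ n ∈ Finset.Icc (lo i).val (hi i).val, (g (n + 1) - g n) := by
          rw [← Fin.map_valEmbedding_Icc, Finset.sum_map]
          rfl
      _ = g ((hi i).val + 1) - g (lo i).val := tele_sum g (hlohi i hiS)
      _ = G (hi i).succ - G (lo i).castSucc := by rw [hg1, hg2]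
  -- only the i in S contribute
  have hstepA' : Bsum a v P
      = ∑ i ∈ S, (inner ℝ (φ i) (G (hi i).succ - G (lo i).castSucc) : ℝ) := by
    rw [hstepA]
    rw [← Finset.sum_subset (Finset.subset_univ S) ?h0]
    · exact Finset.sum_congr rfl fun i hiS => by rw [hstepB i hiS]
    · intro i _ hiS
      have : T i = ∅ := by
        by_contra hne
        exact hiS (by simp [hSdef, Finset.nonempty_iff_ne_empty, hne])
      rw [this, Finset.sum_empty, inner_zero_right]
  -- trivial case: no interval of the atom meets the partition
  rcases S.eq_empty_or_nonempty with hSe | hSne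
  · rw [hstepA', hSe, Finset.sum_empty, abs_zero]
    exact VpNorm_nonneg hv P
  -- construct the coarser partition R from the endpoints
  set A : Finset (Fin (P.K + 1)) :=
    S.image (fun i => (lo i).castSucc) ∪ S.image (fun i => (hi i).succ) with hAdef
  have hloA : ∀ i ∈ S, (lo i).castSucc ∈ A := fun i hiS =>
    Finset.mem_union_left _ (Finset.mem_image_of_mem _ hiS)
  have hhiA : ∀ i ∈ S, (hi i).succ ∈ A := fun i hiS =>
    Finset.mem_union_right _ (Finset.mem_image_of_mem _ hiS)
  have hAmem : ∀ y ∈ A, ∃ i ∈ S, y = (lo i).castSucc ∨ y = (hi i).succ := by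
    intro y hy
    rw [hAdef, Finset.mem_union] at hy
    rcases hy with hy | hy <;> obtain ⟨i, hiS, rfl⟩ := Finset.mem_image.mp hy
    · exact ⟨i, hiS, Or.inl rfl⟩
    · exact ⟨i, hiS, Or.inr rfl⟩
  have hAcard : 2 ≤ A.card := by
    obtain ⟨i0, hi0⟩ := hSne
    refine Finset.one_lt_card.mpr ⟨_, hloA i0 hi0, _, hhiA i0 hi0, ?_⟩
    exact ne_of_lt (Fin.castSucc_lt_succ_iff.mpr (hlohi i0 hi0))
  obtain ⟨R, hR⟩ := exists_ptn_of_finset P A hAcard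
  have hexists : ∀ i ∈ S, ∃ j : Fin R.K,
      R.t j.castSucc = P.t (lo i).castSucc ∧ R.t j.succ = P.t (hi i).succ := by
    intro i hiS
    refine hR _ (hloA i hiS) _ (hhiA i hiS) (Fin.castSucc_lt_succ_iff.mpr (hlohi i hiS)) ?_
    intro z hz
    by_contra hcon
    push_neg at hcon
    obtain ⟨hz1, hz2⟩ := hcon
    obtain ⟨i', hi'S, hcase⟩ := hAmem _ hz
    rcases hcase with rfl | rfl
    · have hlo_lt : lo i < lo i' := Fin.castSucc_lt_castSucc_iff.mp hz1
      have hle : lo i' ≤ hi i := Fin.castSucc_lt_succ_iff.mp hz2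
      have hmem : lo i' ∈ T i :=
        hconvex i _ _ _ (hloT i hiS) (hhiT i hiS) hlo_lt.le hle
      have heqi := hdisj _ _ _ hmem (hloT i' hi'S)
      rw [← heqi] at hlo_lt
      exact lt_irrefl _ hlo_lt
    · have hle : lo i ≤ hi i' := Fin.castSucc_lt_succ_iff.mp hz1
      have hhi_lt : hi i' < hi i := Fin.succ_lt_succ_iff.mp hz2
      have hmem : hi i' ∈ T i :=
        hconvex i _ _ _ (hloT i hiS) (hhiT i hiS) hle hhi_lt.le
      have heqi := hdisj _ _ _ hmem (hhiT i' hi'S)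
      rw [← heqi] at hhi_lt
      exact lt_irrefl _ hhi_lt
  haveI : Inhabited (Fin R.K) := ⟨⟨0, R.hK⟩⟩
  choose! jj hjj1 hjj2 using hexists
  have hjjinj : ∀ i1 ∈ S, ∀ i2 ∈ S, jj i1 = jj i2 → i1 = i2 := by
    intro i1 h1 i2 h2 heq
    have hPt : P.t (lo i1).castSucc = P.t (lo i2).castSucc := by
      rw [← hjj1 i1 h1, ← hjj1 i2 h2, heq]
    have hlo12 : lo i1 = lo i2 := Fin.castSucc_injective _ (P.mono.injective hPt)
    have h := hloT i1 h1
    rw [hlo12] at h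
    exact hdisj _ _ _ h (hloT i2 h2)
  -- Hölder
  have habs : |Bsum a v P|
      ≤ ∑ i ∈ S, ‖φ i‖ * ‖G (hi i).succ - G (lo i).castSucc‖ := by
    rw [hstepA']
    exact (Finset.abs_sum_le_sum_abs _ _).trans
      (Finset.sum_le_sum fun i _ => abs_real_inner_le_norm _ _)
  have hHolder : ∑ i ∈ S, ‖φ i‖ * ‖G (hi i).succ - G (lo i).castSucc‖
      ≤ (∑ i ∈ S, ‖φ i‖ ^ p) ^ (1 / p)
        * (∑ i ∈ S, ‖G (hi i).succ - G (lo i).castSucc‖ ^ p') ^ (1 / p') := by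
    have h := Real.inner_le_Lp_mul_Lq S (fun i => ‖φ i‖)
      (fun i => ‖G (hi i).succ - G (lo i).castSucc‖) hpq
    simpa only [abs_norm] using h
  have h1 : (∑ i ∈ S, ‖φ i‖ ^ p) ^ (1 / p) ≤ 1 := by
    have hle1 : ∑ i ∈ S, ‖φ i‖ ^ p ≤ 1 := by
      rw [← hφsum]
      exact Finset.sum_le_sum_of_subset_of_nonneg (Finset.subset_univ S)
        fun i _ _ => Real.rpow_nonneg (norm_nonneg _) _
    calc (∑ i ∈ S, ‖φ i‖ ^ p) ^ (1 / p) ≤ 1 ^ (1 / p) :=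
          Real.rpow_le_rpow
            (Finset.sum_nonneg fun i _ => Real.rpow_nonneg (norm_nonneg _) _) hle1
            (one_div_nonneg.mpr hpq.pos.le)
      _ = 1 := Real.one_rpow _
  have h2 : (∑ i ∈ S, ‖G (hi i).succ - G (lo i).castSucc‖ ^ p') ^ (1 / p')
      ≤ VpNorm p' v := by
    have hWR : ∀ i ∈ S, ‖G (hi i).succ - G (lo i).castSucc‖
        = ‖evalE v (R.t (jj i).succ) - evalE v (R.t (jj i).castSucc)‖ := by
      intro i hiS
      rw [hjj1 i hiS, hjj2 i hiS]
    have hsub : ∑ i ∈ S, ‖G (hi i).succ - G (lo i).castSucc‖ ^ p'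
        ≤ ∑ k : Fin R.K, ‖evalE v (R.t k.succ) - evalE v (R.t k.castSucc)‖ ^ p' := by
      calc ∑ i ∈ S, ‖G (hi i).succ - G (lo i).castSucc‖ ^ p'
          = ∑ i ∈ S, ‖evalE v (R.t (jj i).succ) - evalE v (R.t (jj i).castSucc)‖ ^ p' :=
            Finset.sum_congr rfl fun i hiS => by rw [hWR i hiS]
        _ = ∑ k ∈ S.image jj, ‖evalE v (R.t k.succ) - evalE v (R.t k.castSucc)‖ ^ p' :=
            by rw [Finset.sum_image hjjinj]
        _ ≤ ∑ k : Fin R.K, ‖evalE v (R.t k.succ) - evalE v (R.t k.castSucc)‖ ^ p' :=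
            Finset.sum_le_sum_of_subset_of_nonneg (Finset.subset_univ _)
              fun k _ _ => Real.rpow_nonneg (norm_nonneg _) _
    calc (∑ i ∈ S, ‖G (hi i).succ - G (lo i).castSucc‖ ^ p') ^ (1 / p')
        ≤ (∑ k : Fin R.K, ‖evalE v (R.t k.succ) - evalE v (R.t k.castSucc)‖ ^ p') ^ (1 / p') :=
          Real.rpow_le_rpow
            (Finset.sum_nonneg fun i _ => Real.rpow_nonneg (norm_nonneg _) _) hsub
            (one_div_nonneg.mpr hpq.symm.pos.le)
      _ = VpSum p' v R := rfl
      _ ≤ VpNorm p' v := VpSum_le_VpNorm hv R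
  calc |Bsum a v P|
      ≤ ∑ i ∈ S, ‖φ i‖ * ‖G (hi i).succ - G (lo i).castSucc‖ := habs
    _ ≤ (∑ i ∈ S, ‖φ i‖ ^ p) ^ (1 / p)
        * (∑ i ∈ S, ‖G (hi i).succ - G (lo i).castSucc‖ ^ p') ^ (1 / p') := hHolder
    _ ≤ 1 * VpNorm p' v := by
        refine mul_le_mul h1 h2 ?_ zero_le_one
        exact Real.rpow_nonneg
          (Finset.sum_nonneg fun i _ => Real.rpow_nonneg (norm_nonneg _) _) _
    _ = VpNorm p' v := one_mul _

end AuxB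

/-- For a finite partition `𝔱 ∈ 𝒵`, `u ∈ U^p` and `v ∈ V^{p'}` with
`1/p + 1/p' = 1`, the pairing `B_𝔱(u,v) = ∑_k ⟨u(t_{k−1}), v(t_k) − v(t_{k−1})⟩` satisfies
`|B_𝔱(u,v)| ≤ ‖u‖_{U^p} ‖v‖_{V^{p'}}`. -/
theorem Bsum_le (p p' : ℝ) (hp : 1 < p) (hpp' : 1 / p + 1 / p' = 1)
    {H : Type*} [NormedAddCommGroup H] [InnerProductSpace ℝ H] [CompleteSpace H]
    (u v : ℝ → H) (hu : MemUp p u) (hv : MemVp p' v) (P : Ptn) :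
    |Bsum u v P| ≤ UpNorm p u * VpNorm p' v := by
  classical
  have hpq : Real.HolderConjugate p p' := Real.holderConjugate_iff.mpr ⟨hp, by simpa [one_div] using hpp'⟩
  have hbdd := hv.2.2
  have hV0 : 0 ≤ VpNorm p' v := VpNorm_nonneg hbdd P
  have key : ∀ c a, UpHasDecomp p u c a →
      |Bsum u v P| ≤ (∑' j, |c j|) * VpNorm p' v := by
    intro c a hd
    obtain ⟨hatoms, hsumc, hpt⟩ := hd
    have hptE : ∀ x : EReal, HasSum (fun j => c j • evalE (a j) x) (evalE u x) := by
      intro x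
      by_cases hx : x = ⊤
      · subst hx
        simp only [evalE, if_true, eq_self_iff_true, smul_zero]
        exact (hasSum_zero : HasSum (fun _ : ℕ => (0 : H)) 0)
      · simp only [evalE, if_neg hx]
        exact hpt x.toReal
    have hBk : ∀ k : Fin P.K, HasSum
        (fun j => c j * (inner ℝ (evalE (a j) (P.t k.castSucc))
            (evalE v (P.t k.succ) - evalE v (P.t k.castSucc)) : ℝ))
        (inner ℝ (evalE u (P.t k.castSucc))
            (evalE v (P.t k.succ) - evalE v (P.t k.castSucc)) : ℝ) := by
      intro k
      set Δ : H := evalE v (P.t k.succ) - evalE v (P.t k.castSucc) with hΔ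
      have h1 := (hptE (P.t k.castSucc)).mapL (innerSL ℝ Δ)
      have h2 : ∀ w : H, (innerSL ℝ Δ) w = (inner ℝ w Δ : ℝ) := by
        intro w; rw [innerSL_apply_apply, real_inner_comm]
      simp only [h2] at h1
      simpa only [real_inner_smul_left] using h1
    have hB : HasSum (fun j => c j * Bsum (a j) v P) (Bsum u v P) := by
      have h : HasSum
          (fun j => ∑ k : Fin P.K, c j * (inner ℝ (evalE (a j) (P.t k.castSucc))
              (evalE v (P.t k.succ) - evalE v (P.t k.castSucc)) : ℝ))
          (∑ k : Fin P.K, (inner ℝ (evalE u (P.t k.castSucc))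
              (evalE v (P.t k.succ) - evalE v (P.t k.castSucc)) : ℝ)) :=
        hasSum_sum fun k _ => hBk k
      simp only [← Finset.mul_sum] at h
      exact h
    have hVB : ∀ j, |Bsum (a j) v P| ≤ VpNorm p' v := fun j =>
      atom_Bsum_le hpq (a j) v (hatoms j) hbdd P
    have habs_sum : Summable (fun j => |c j| * |Bsum (a j) v P|) := by
      refine Summable.of_nonneg_of_le
        (fun j => mul_nonneg (abs_nonneg _) (abs_nonneg _)) (fun j => ?_)
        (hsumc.mul_right (VpNorm p' v))
      exact mul_le_mul_of_nonneg_left (hVB j) (abs_nonneg _)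
    calc |Bsum u v P| = |∑' j, c j * Bsum (a j) v P| := by rw [hB.tsum_eq]
      _ ≤ ∑' j, |c j| * |Bsum (a j) v P| := by
          have h := norm_tsum_le_tsum_norm (f := fun j => c j * Bsum (a j) v P)
            (by simpa [Real.norm_eq_abs, abs_mul] using habs_sum)
          simpa [Real.norm_eq_abs, abs_mul] using h
      _ ≤ ∑' j, |c j| * VpNorm p' v :=
          Summable.tsum_le_tsum (fun j =>
              mul_le_mul_of_nonneg_left (hVB j) (abs_nonneg _))
            habs_sum (hsumc.mul_right _)
      _ = (∑' j, |c j|) * VpNorm p' v := tsum_mul_right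
  obtain ⟨c0, a0, hd0⟩ := hu
  have hne : {S | ∃ c a, UpHasDecomp p u c a ∧ S = ∑' j, |c j|}.Nonempty :=
    ⟨_, c0, a0, hd0, rfl⟩
  rcases eq_or_lt_of_le hV0 with hV | hV
  · have h := key c0 a0 hd0
    rw [← hV, mul_zero] at h ⊢
    exact h
  · rw [UpNorm, ← div_le_iff₀ hV]
    refine le_csInf hne ?_
    rintro S ⟨c, a, hd, rfl⟩
    rw [div_le_iff₀ hV]
    exact key c a hd
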